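/- Let Ω be a set, Σ : Ω × Ω → ℝ arbitrary, n ≥ 1, and P, Q : Fin(n+1) → Ω. Let k ≠ l be indices in {0,1,…,n} and let P' be obtained from P by transposing the points with indices k and l (P' = P ∘ (k l)). Then for every Q : Fin(n+1) → Ω one has (P'⃗ⁿ.Q⃗ⁿ) = −(P⃗ⁿ.Q⃗ⁿ): permutation of any two points of an nth order multivector changes the sign of its scalar Σ-product with every multivector. -/
import Mathlib


/-- The scalar Σ-product `(P⃗ⁿ.Q⃗ⁿ)` of two `n`th order multivectors: the determinant
of the `n × n` matrix with entries `(P₀Pᵢ.Q₀Qₖ)`. -/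
noncomputable def msp {Ω : Type} (W : Ω → Ω → ℝ) (n : ℕ) (P Q : Fin (n + 1) → Ω) : ℝ :=
  Matrix.det (Matrix.of fun i k : Fin n =>
    W (P 0) (Q k.succ) + W (P i.succ) (Q 0) - W (P 0) (Q 0) - W (P i.succ) (Q k.succ))

lemma msp_eq_aux {Ω : Type} (W : Ω → Ω → ℝ) (n : ℕ) (P Q : Fin (n + 1) → Ω) :
    msp W n P Q = (-1) ^ n * Matrix.det (Matrix.of fun i j : Fin (n + 1) =>
      Fin.cases (1 : ℝ) (fun c => W (P i) (Q c.succ) - W (P i) (Q 0)) j) := by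
  set A : Fin (n + 1) → Fin n → ℝ := fun i c => W (P i) (Q c.succ) - W (P i) (Q 0) with hA
  set B : Matrix (Fin (n + 1)) (Fin (n + 1)) ℝ :=
    Matrix.of fun i j => Fin.cases (1 : ℝ) (fun c => A i c) j with hBdef
  set C : Matrix (Fin (n + 1)) (Fin (n + 1)) ℝ :=
    Matrix.of fun i j =>
      Fin.cases (if i = 0 then (1 : ℝ) else 0)
        (fun c => if i = 0 then A 0 c else A i c - A 0 c) j with hCdef
  have hBC : Matrix.det C = Matrix.det B := by
    apply Matrix.det_eq_of_forall_row_eq_smul_add_const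
      (fun i => if i = 0 then (0 : ℝ) else -1) 0 (by simp)
    intro i j
    refine Fin.cases ?_ (fun c => ?_) j <;> by_cases hi : i = 0 <;>
      simp [hCdef, hBdef, hi]
    ring
  have hC0 : ∀ i : Fin (n + 1), C i 0 = if i = 0 then 1 else 0 := fun i => rfl
  have hCdet : Matrix.det C = Matrix.det (C.submatrix (Fin.succAbove 0) Fin.succ) := by
    rw [Matrix.det_succ_column_zero]
    rw [Fin.sum_univ_succ]
    simp [hC0, Fin.succ_ne_zero]
  have hsub : C.submatrix (Fin.succAbove 0) Fin.succ =
      - Matrix.of (fun i c : Fin n =>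
        W (P 0) (Q c.succ) + W (P i.succ) (Q 0) - W (P 0) (Q 0) - W (P i.succ) (Q c.succ)) := by
    ext i c
    simp [hCdef, hA, Fin.succ_ne_zero, Fin.succAbove]
    ring
  have := Matrix.det_neg (Matrix.of (fun i c : Fin n =>
        W (P 0) (Q c.succ) + W (P i.succ) (Q 0) - W (P 0) (Q 0) - W (P i.succ) (Q c.succ)))
  rw [msp, ← hBC, hCdet, hsub, this, Fintype.card_fin, ← mul_assoc, ← pow_add, ← two_mul,
    pow_mul]
  norm_num

/-- Permutation of any two points of an `n`th order multivector changes the sign of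
its scalar Σ-product with every multivector. -/
theorem multivector_swap_changes_sign
    (Ω : Type) (W : Ω → Ω → ℝ) (n : ℕ) (hn : 1 ≤ n)
    (P : Fin (n + 1) → Ω) (k l : Fin (n + 1)) (hkl : k ≠ l)
    (Q : Fin (n + 1) → Ω) :
    msp W n (P ∘ Equiv.swap k l) Q = -msp W n P Q := by
  rw [msp_eq_aux, msp_eq_aux]
  have hB : (Matrix.of (fun i j : Fin (n + 1) =>
      Fin.cases (1 : ℝ) (fun c => W ((P ∘ Equiv.swap k l) i) (Q c.succ)
        - W ((P ∘ Equiv.swap k l) i) (Q 0)) j) : Matrix (Fin (n+1)) (Fin (n+1)) ℝ) =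
      ((Matrix.of (fun i j : Fin (n + 1) =>
        Fin.cases (1 : ℝ) (fun c => W (P i) (Q c.succ) - W (P i) (Q 0)) j) :
        Matrix (Fin (n+1)) (Fin (n+1)) ℝ)).submatrix (Equiv.swap k l) id := by
    ext i j
    rfl
  rw [hB, Matrix.det_permute, Equiv.Perm.sign_swap hkl]
  simp
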